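/- For all integers n ≥ 2 and r ≥ 1, setting ℓ = ⌈4·r·log₂ n⌉, there exists a function x from the set of all 2-element subsets of {1,…,n} to (ℤ/2ℤ)^ℓ such that for every nonempty collection A of 2-element subsets of {1,…,n} with |A| ≤ 2r, the sum Σ_{e ∈ A} x(e) is nonzero in (ℤ/2ℤ)^ℓ. In other words, the edges of the complete graph on n vertices admit r-resilient names of length ℓ ≤ ⌈4·r·log₂ n⌉. -/

import Mathlib

open Finset

/-- Counting lemma: the set of functions whose sum over a fixed set containing `e₀`
is zero has size `card (E → V) / card V`, stated multiplicatively. -/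
lemma card_filter_sum_eq_zero {E V : Type*} [Fintype E] [DecidableEq E] [Fintype V]
    [DecidableEq V] [AddCommGroup V] (hV : ∀ v : V, v + v = 0)
    (A : Finset E) {e₀ : E} (he : e₀ ∈ A) :
    ((Finset.univ.filter (fun x : E → V => ∑ e ∈ A, x e = 0)).card) * Fintype.card V
      = Fintype.card (E → V) := by
  have hneg : ∀ v : V, -v = v := fun v => neg_eq_of_add_eq_zero_right (hV v)
  have key : ∀ (z : E → V) (v : V), (∑ e ∈ A, z e = 0) →
      ∑ e ∈ A.erase e₀, z e = z e₀ := by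
    intro z v hz
    have h1 : z e₀ + ∑ e ∈ A.erase e₀, z e = 0 := by
      rw [Finset.add_sum_erase A z he]; exact hz
    have := eq_neg_of_add_eq_zero_right h1
    rw [this, hneg]
  let eqv : (E → V) ≃ {x : E → V // ∑ e ∈ A, x e = 0} × V :=
  { toFun := fun x => (⟨Function.update x e₀ (∑ e ∈ A.erase e₀, x e), by
      rw [← Finset.add_sum_erase A _ he, Function.update_self]
      have : ∑ e ∈ A.erase e₀, Function.update x e₀ (∑ e ∈ A.erase e₀, x e) e
          = ∑ e ∈ A.erase e₀, x e := by
        refine Finset.sum_congr rfl fun e heA => ?_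
        exact Function.update_of_ne (Finset.ne_of_mem_erase heA) _ _
      rw [this]; exact hV _⟩, x e₀)
    invFun := fun p => Function.update p.1.1 e₀ p.2
    left_inv := fun x => by
      simp only [Function.update_idem, Function.update_eq_self]
    right_inv := fun p => by
      obtain ⟨⟨z, hz⟩, v⟩ := p
      have hsum : ∑ e ∈ A.erase e₀, Function.update z e₀ v e = z e₀ := by
        have : ∑ e ∈ A.erase e₀, Function.update z e₀ v e = ∑ e ∈ A.erase e₀, z e := by
          refine Finset.sum_congr rfl fun e heA => ?_
          exact Function.update_of_ne (Finset.ne_of_mem_erase heA) _ _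
        rw [this]; exact key z v hz
      ext e
      · simp only [hsum, Function.update_idem, Function.update_eq_self]
      · simp only [Function.update_self]
      }
  have := Fintype.card_congr eqv
  rw [Fintype.card_prod, Fintype.card_subtype] at this
  exact this.symm

lemma pow_le_two_pow_ceil (n r : ℕ) (hn : 2 ≤ n) :
    n ^ (4 * r) ≤ 2 ^ ⌈4 * (r : ℝ) * Real.logb 2 n⌉₊ := by
  have hn0 : (0:ℝ) < n := by positivity
  have hlogb : (0:ℝ) ≤ Real.logb 2 n := by
    apply Real.logb_nonneg (by norm_num)
    exact_mod_cast le_trans (by norm_num) hn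
  set ℓ := ⌈4 * (r : ℝ) * Real.logb 2 n⌉₊ with hℓ
  have h1 : ((n : ℝ)) ^ (4 * r) = (2:ℝ) ^ (Real.logb 2 n * (4 * r : ℕ)) := by
    conv_lhs => rw [← Real.rpow_logb (by norm_num : (0:ℝ) < 2) (by norm_num) hn0]
    rw [← Real.rpow_natCast ((2:ℝ) ^ Real.logb 2 (n:ℝ)) (4 * r), ← Real.rpow_mul (by norm_num)]
  have h2 : Real.logb 2 n * (4 * r : ℕ) ≤ (ℓ : ℝ) := by
    have := Nat.le_ceil (4 * (r : ℝ) * Real.logb 2 n)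
    rw [hℓ]; push_cast
    nlinarith [this]
  have h3 : ((n : ℝ)) ^ (4 * r) ≤ (2:ℝ) ^ (ℓ : ℝ) := by
    rw [h1]
    exact Real.rpow_le_rpow_of_exponent_le (by norm_num) h2
  rw [Real.rpow_natCast] at h3
  exact_mod_cast h3

/-- **existence of resilient edge names.** For all `n ≥ 2` and
`r ≥ 1`, with `ℓ = ⌈4·r·log₂ n⌉`, the edges of the complete graph on `n`
vertices (i.e. the 2-element subsets of `Fin n`) admit names in `(ℤ/2ℤ)^ℓ` such
that the sum of the names over any nonempty collection of at most `2r` edges is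
nonzero. -/
theorem resilient_names_exist (n r : ℕ) (hn : 2 ≤ n) (hr : 1 ≤ r) :
    ∃ x : {s : Finset (Fin n) // s.card = 2} →
        (Fin ⌈4 * (r : ℝ) * Real.logb 2 n⌉₊ → ZMod 2),
      ∀ A : Finset {s : Finset (Fin n) // s.card = 2},
        A.Nonempty → A.card ≤ 2 * r → ∑ e ∈ A, x e ≠ 0 := by
  by_contra hcon
  push_neg at hcon
  set ℓ := ⌈4 * (r : ℝ) * Real.logb 2 n⌉₊ with hℓ
  set E := {s : Finset (Fin n) // s.card = 2}
  set V := (Fin ℓ → ZMod 2)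
  have hVchar : ∀ v : V, v + v = 0 := by
    intro v; funext i
    show v i + v i = 0
    exact CharTwo.add_self_eq_zero (v i)
  have hcardV : Fintype.card V = 2 ^ ℓ := by
    simp [V, Fintype.card_fun, ZMod.card]
  -- the family of bad subsets
  set S : Finset (Finset E) :=
    Finset.univ.filter (fun A => A.Nonempty ∧ A.card ≤ 2 * r) with hS
  -- covering: every x lies in some bad set
  have hcover : (Finset.univ : Finset (E → V)) ⊆
      S.biUnion (fun A => Finset.univ.filter (fun x : E → V => ∑ e ∈ A, x e = 0)) := by
    intro x _
    obtain ⟨A, hA1, hA2, hA3⟩ := hcon x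
    exact Finset.mem_biUnion.2 ⟨A, by simp [hS, hA1, hA2], by simp [hA3]⟩
  have hcount : Fintype.card (E → V) ≤
      ∑ A ∈ S, (Finset.univ.filter (fun x : E → V => ∑ e ∈ A, x e = 0)).card := by
    calc Fintype.card (E → V) = (Finset.univ : Finset (E → V)).card := by
          rw [Finset.card_univ]
      _ ≤ _ := le_trans (Finset.card_le_card hcover) (Finset.card_biUnion_le)
  -- each bad set has size card(E→V)/card V
  have hmul : Fintype.card (E → V) * Fintype.card V ≤ S.card * Fintype.card (E → V) := by
    calc Fintype.card (E → V) * Fintype.card V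
        ≤ (∑ A ∈ S, (Finset.univ.filter (fun x : E → V => ∑ e ∈ A, x e = 0)).card)
            * Fintype.card V := Nat.mul_le_mul_right _ hcount
      _ = ∑ A ∈ S, ((Finset.univ.filter (fun x : E → V => ∑ e ∈ A, x e = 0)).card
            * Fintype.card V) := by rw [Finset.sum_mul]
      _ = ∑ A ∈ S, Fintype.card (E → V) := by
          refine Finset.sum_congr rfl fun A hA => ?_
          have hA' : A.Nonempty := ((Finset.mem_filter.1 hA).2).1
          obtain ⟨e₀, he₀⟩ := hA'
          exact card_filter_sum_eq_zero hVchar A he₀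
      _ = S.card * Fintype.card (E → V) := by rw [Finset.sum_const, smul_eq_mul]
  have hposEV : 0 < Fintype.card (E → V) := Fintype.card_pos
  have hVleS : Fintype.card V ≤ S.card := by
    have := hmul
    rw [mul_comm (Fintype.card (E → V)) (Fintype.card V)] at this
    exact Nat.le_of_mul_le_mul_right this hposEV
  -- now bound S.card
  set m := Fintype.card E with hm
  have hmval : m = n.choose 2 := by
    rw [hm]
    exact (Fintype.card_finset_len 2).trans (by rw [Fintype.card_fin])
  have hmpos : 1 ≤ m := by
    rw [hmval]; exact Nat.choose_pos (le_trans (by norm_num) hn)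
  have h2m : 2 * m ≤ n ^ 2 := by
    rw [hmval, Nat.choose_two_right]
    have hdvd : 2 ∣ n * (n - 1) := (Nat.even_mul_pred_self n).two_dvd
    rw [Nat.mul_div_cancel' hdvd]
    nlinarith [Nat.sub_le n 1]
  have hSsub : S ⊆ (Finset.Icc 1 (2 * r)).biUnion
      (fun k => Finset.powersetCard k (Finset.univ : Finset E)) := by
    intro A hA
    obtain ⟨-, hA1, hA2⟩ := Finset.mem_filter.1 hA
    refine Finset.mem_biUnion.2 ⟨A.card, ?_, ?_⟩
    · exact Finset.mem_Icc.2 ⟨Finset.card_pos.2 hA1, hA2⟩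
    · exact Finset.mem_powersetCard.2 ⟨Finset.subset_univ A, rfl⟩
  have hScard : S.card ≤ 2 * r * m ^ (2 * r) := by
    calc S.card ≤ ((Finset.Icc 1 (2 * r)).biUnion
          (fun k => Finset.powersetCard k (Finset.univ : Finset E))).card :=
            Finset.card_le_card hSsub
      _ ≤ ∑ k ∈ Finset.Icc 1 (2 * r), (Finset.powersetCard k (Finset.univ : Finset E)).card :=
            Finset.card_biUnion_le
      _ = ∑ k ∈ Finset.Icc 1 (2 * r), m.choose k := by
            refine Finset.sum_congr rfl fun k _ => ?_
            rw [Finset.card_powersetCard, Finset.card_univ]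
      _ ≤ ∑ k ∈ Finset.Icc 1 (2 * r), m ^ (2 * r) := by
            refine Finset.sum_le_sum fun k hk => ?_
            exact le_trans (Nat.choose_le_pow m k)
              (Nat.pow_le_pow_right hmpos (Finset.mem_Icc.1 hk).2)
      _ = (2 * r) * m ^ (2 * r) := by
            rw [Finset.sum_const, Nat.card_Icc]
            simp [smul_eq_mul]
  have hfinal : S.card < 2 ^ ℓ := by
    have h1 : 2 * r * m ^ (2 * r) < 2 ^ (2 * r) * m ^ (2 * r) := by
      exact (Nat.mul_lt_mul_right (Nat.pow_pos hmpos)).2 (Nat.lt_two_pow_self)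
    have h2 : 2 ^ (2 * r) * m ^ (2 * r) = (2 * m) ^ (2 * r) := (mul_pow 2 m (2 * r)).symm
    have h3 : (2 * m) ^ (2 * r) ≤ (n ^ 2) ^ (2 * r) := Nat.pow_le_pow_left h2m _
    have h4 : (n ^ 2) ^ (2 * r) = n ^ (4 * r) := by rw [← pow_mul]; ring_nf
    have h5 : n ^ (4 * r) ≤ 2 ^ ℓ := pow_le_two_pow_ceil n r hn
    calc S.card ≤ 2 * r * m ^ (2 * r) := hScard
      _ < 2 ^ (2 * r) * m ^ (2 * r) := h1
      _ = (2 * m) ^ (2 * r) := h2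
      _ ≤ (n ^ 2) ^ (2 * r) := h3
      _ = n ^ (4 * r) := h4
      _ ≤ 2 ^ ℓ := h5
  rw [hcardV] at hVleS
  exact absurd hVleS (not_le.2 hfinal)
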